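/- Let F ∈ C¹(ℝ×ℝⁿ×[0,1], ℝⁿ), and assume that for every t* ∈ ℝ, ζ ∈ ℝⁿ, ε ∈ [0,1] the Cauchy problem ẋ = F(t,x,ε), x(t*) = ζ has a unique solution x̃(·, t*, ζ, ε) defined on all of ℝ, depending continuously differentiably on (t, ζ, ε). Then for any t* ∈ ℝ and ξ* ∈ ℝⁿ there exists γ > 0 and a continuously differentiable map ζ : B_γ(0) × B_γ(ξ*) × [0,γ) → ℝⁿ with ζ(0, ξ*, 0) = ξ*, such that the function x(t, Δ, ξ, ε) := x̃(t, t*, ζ(Δ, ξ, ε), ε) is continuously differentiable on ℝ × B_γ(0) × B_γ(ξ*) × [0,γ) and satisfies the vector-time initial condition x^j(t* + Δ^j, Δ, ξ, ε) = ξ^j for every component j = 1,…,n; moreover ζ (hence the solution) is locally unique: it is the only point near ξ* whose solution satisfies this vector-time initial condition. -/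

import Mathlib

open Set Metric Filter
open Asymptotics Topology ContinuousLinearMap


theorem halfspace_ift
    {E P : Type*} [NormedAddCommGroup E] [NormedSpace ℝ E] [CompleteSpace E]
    [NormedAddCommGroup P] [NormedSpace ℝ P]
    (G : E × P → E) (T : Set P) (hTc : Convex ℝ T) (hTu : UniqueDiffOn ℝ T)
    (b₀ : E) (q₀ : P) (hq₀ : q₀ ∈ T)
    (hG : ContDiffOn ℝ 1 G ((univ : Set E) ×ˢ T))
    (hA : (fderivWithin ℝ G ((univ : Set E) ×ˢ T) (b₀, q₀)).comp
        (ContinuousLinearMap.inl ℝ E P) = ContinuousLinearMap.id ℝ E) :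
    ∃ δ > (0:ℝ), ∃ Z : E × P → E,
      ContDiffOn ℝ 1 Z (ball (G (b₀, q₀)) δ ×ˢ (T ∩ ball q₀ δ)) ∧
      ∀ ξ ∈ ball (G (b₀, q₀)) δ, ∀ w ∈ T ∩ ball q₀ δ,
        G (Z (ξ, w), w) = ξ ∧ ∀ b' ∈ ball b₀ δ, G (b', w) = ξ → b' = Z (ξ, w) := by
  classical
  set S' : Set (E × P) := (univ : Set E) ×ˢ T with hS'
  have hS'u : UniqueDiffOn ℝ S' := uniqueDiffOn_univ.prod hTu
  set p₀ : E × P := (b₀, q₀) with hp₀def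
  have hp₀ : p₀ ∈ S' := ⟨mem_univ _, hq₀⟩
  set c₀ : E := G p₀ with hc₀def
  set f : E × P → (E × P) →L[ℝ] E := fderivWithin ℝ G S' with hfdef
  have hfc : ContinuousOn f S' := hG.continuousOn_fderivWithin hS'u le_rfl
  set A : E × P → E →L[ℝ] E := fun p => (f p).comp (inl ℝ E P) with hAdef
  have hinlnorm : ‖inl ℝ E P‖ ≤ 1 := by
    refine ContinuousLinearMap.opNorm_le_bound _ zero_le_one (fun x => ?_)
    rw [inl_apply, one_mul, Prod.norm_def]
    simp [norm_nonneg]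
  have hinl : ∀ (L L' : (E × P) →L[ℝ] E), ‖L.comp (inl ℝ E P) - L'.comp (inl ℝ E P)‖ ≤ ‖L - L'‖ := by
    intro L L'
    have heq : L.comp (inl ℝ E P) - L'.comp (inl ℝ E P) = (L - L').comp (inl ℝ E P) := by
      ext x; simp
    rw [heq]
    calc ‖(L - L').comp (inl ℝ E P)‖ ≤ ‖L - L'‖ * ‖inl ℝ E P‖ := ContinuousLinearMap.opNorm_comp_le _ _
      _ ≤ ‖L - L'‖ := mul_le_of_le_one_right (norm_nonneg _) hinlnorm
  -- continuity of f at p₀ : pick δ₀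
  obtain ⟨δ₀, hδ₀pos, hδ₀⟩ : ∃ δ₀ > (0:ℝ), ∀ p ∈ S', dist p p₀ < δ₀ → dist (f p) (f p₀) < 1/2 := by
    have := Metric.continuousWithinAt_iff.1 (hfc p₀ hp₀) (1/2) (by norm_num)
    obtain ⟨d, hd, h⟩ := this
    exact ⟨d, hd, fun p hp hdist => h hp hdist⟩
  have hA1 : ∀ p ∈ S', dist p p₀ < δ₀ → ‖A p - 1‖ ≤ 1/2 := by
    intro p hp hd
    have h1 : A p₀ = 1 := hA
    calc ‖A p - 1‖ = ‖(f p).comp (inl ℝ E P) - (f p₀).comp (inl ℝ E P)‖ := by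
          rw [← h1]
      _ ≤ ‖f p - f p₀‖ := hinl _ _
      _ ≤ 1/2 := by
          have := hδ₀ p hp hd
          rw [dist_eq_norm] at this
          linarith
  set M : ℝ := ‖f p₀‖ + 1/2 with hMdef
  have hMpos : 0 < M := by positivity
  have hfM : ∀ p ∈ S', dist p p₀ < δ₀ → ‖f p‖ ≤ M := by
    intro p hp hd
    have := hδ₀ p hp hd
    have h2 : ‖f p‖ ≤ ‖f p₀‖ + dist (f p) (f p₀) := by
      rw [dist_eq_norm]
      linarith [norm_sub_norm_le (f p) (f p₀)]
    rw [hMdef]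
    linarith
  set r : ℝ := δ₀ / 2 with hrdef
  have hrpos : 0 < r := by positivity
  set V : Set (E × P) := closedBall b₀ r ×ˢ (T ∩ closedBall q₀ r) with hVdef
  have hVS' : V ⊆ S' := fun p hp => ⟨mem_univ _, hp.2.1⟩
  have hVd : ∀ p ∈ V, dist p p₀ < δ₀ := by
    intro p hp
    rw [Prod.dist_eq]
    have h1 : dist p.1 b₀ ≤ r := hp.1
    have h2 : dist p.2 q₀ ≤ r := hp.2.2
    have : r < δ₀ := by rw [hrdef]; linarith
    exact max_lt (lt_of_le_of_lt h1 this) (lt_of_le_of_lt h2 this)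
  have hVc : Convex ℝ V := (convex_closedBall _ _).prod (hTc.inter (convex_closedBall _ _))
  have hGdiff : ∀ p ∈ S', HasFDerivWithinAt G (f p) S' p := fun p hp =>
    ((hG.differentiableOn one_ne_zero) p hp).hasFDerivWithinAt
  -- Lipschitz bound for G on V
  have hGLip : ∀ p ∈ V, ∀ p' ∈ V, ‖G p' - G p‖ ≤ M * ‖p' - p‖ := by
    intro p hp p' hp'
    exact Convex.norm_image_sub_le_of_norm_hasFDerivWithin_le
      (fun x hx => (hGdiff x (hVS' hx)).mono hVS')
      (fun x hx => hfM x (hVS' hx) (hVd x hx)) hVc hp hp'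
  -- contraction estimate in the b variable
  have hContr : ∀ w ∈ T ∩ closedBall q₀ r, ∀ b ∈ closedBall b₀ r, ∀ b' ∈ closedBall b₀ r,
      ‖(G (b', w) - b') - (G (b, w) - b)‖ ≤ 1/2 * ‖b' - b‖ := by
    intro w hw b hb b' hb'
    have key : ∀ x ∈ closedBall b₀ r,
        HasFDerivWithinAt (fun b => G (b, w) - b) (A (x, w) - 1) (closedBall b₀ r) x := by
      intro x hx
      have hxV : ((x : E), w) ∈ V := ⟨hx, hw⟩
      have hι : HasFDerivWithinAt (fun b : E => ((b , w) : E × P)) (inl ℝ E P) (closedBall b₀ r) x := by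
        have h1 : HasFDerivAt (fun b : E => inl ℝ E P b + ((0 : E), w)) (inl ℝ E P) x :=
          (ContinuousLinearMap.hasFDerivAt _).add_const _
        have h2 : (fun b : E => inl ℝ E P b + ((0 : E), w)) = fun b : E => ((b, w) : E × P) := by
          funext b; simp [Prod.ext_iff]
        rw [h2] at h1
        exact h1.hasFDerivWithinAt
      have hcomp : HasFDerivWithinAt (fun b : E => G (b, w)) ((f (x, w)).comp (inl ℝ E P))
          (closedBall b₀ r) x :=
        (hGdiff _ (hVS' hxV)).comp x hι (fun b hb => hVS' ⟨hb, hw⟩)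
      have := hcomp.sub (hasFDerivWithinAt_id x _)
      simpa [hAdef, ContinuousLinearMap.one_def, Pi.sub_def] using this
    exact Convex.norm_image_sub_le_of_norm_hasFDerivWithin_le key
      (fun x hx => hA1 (x, w) (hVS' ⟨hx, hw⟩) (hVd _ ⟨hx, hw⟩)) (convex_closedBall _ _) hb hb'
  -- continuity of G at p₀
  obtain ⟨δ₃, hδ₃pos, hδ₃⟩ : ∃ δ₃ > (0:ℝ), ∀ p ∈ S', dist p p₀ < δ₃ → dist (G p) c₀ < r/4 := by
    have := Metric.continuousWithinAt_iff.1 (hG.continuousOn p₀ hp₀) (r/4) (by positivity)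
    obtain ⟨d, hd, h⟩ := this
    exact ⟨d, hd, fun p hp hdist => h hp hdist⟩
  set δ : ℝ := min δ₃ (r/4) with hδdef
  have hδpos : 0 < δ := lt_min hδ₃pos (by positivity)
  have hδr : δ ≤ r := le_trans (min_le_right _ _) (by linarith)
  have hδr4 : δ ≤ r/4 := min_le_right _ _
  have hδδ₃ : δ ≤ δ₃ := min_le_left _ _
  set D : Set (E × P) := ball c₀ δ ×ˢ (T ∩ ball q₀ δ) with hDdef
  have hGb₀ : ∀ w ∈ T ∩ ball q₀ δ, ‖G (b₀, w) - c₀‖ < r/4 := by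
    intro w hw
    have h1 : ((b₀ : E), w) ∈ S' := ⟨mem_univ _, hw.1⟩
    have h2 : dist ((b₀ : E), w) p₀ < δ₃ := by
      rw [hp₀def, Prod.dist_eq]
      simp only [dist_self]
      exact max_lt hδ₃pos (lt_of_lt_of_le hw.2 hδδ₃)
    have := hδ₃ _ h1 h2
    rwa [dist_eq_norm] at this
  -- existence and key properties of the fixed point
  have hball_sub : ∀ w ∈ T ∩ ball q₀ δ, w ∈ T ∩ closedBall q₀ r := by
    intro w hw
    exact ⟨hw.1, mem_closedBall.2 (le_of_lt (lt_of_lt_of_le hw.2 hδr))⟩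
  have hselfmap : ∀ ξ ∈ ball c₀ δ, ∀ w ∈ T ∩ ball q₀ δ, ∀ b ∈ closedBall b₀ r,
      b - G (b, w) + ξ ∈ closedBall b₀ r := by
    intro ξ hξ w hw b hb
    have h1 : ‖(G (b, w) - b) - (G (b₀, w) - b₀)‖ ≤ 1/2 * ‖b - b₀‖ :=
      hContr w (hball_sub w hw) b₀ (mem_closedBall_self hrpos.le) b hb
    have h2 : ‖G (b₀, w) - c₀‖ < r/4 := hGb₀ w hw
    have h3 : ‖ξ - c₀‖ < δ := by rw [← dist_eq_norm]; exact hξ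
    have h4 : ‖b - b₀‖ ≤ r := by rw [← dist_eq_norm]; exact hb
    rw [mem_closedBall, dist_eq_norm]
    have heq : b - G (b, w) + ξ - b₀ =
        -((G (b, w) - b) - (G (b₀, w) - b₀)) + (ξ - c₀) + -(G (b₀, w) - c₀) := by abel
    rw [heq]
    calc ‖-((G (b, w) - b) - (G (b₀, w) - b₀)) + (ξ - c₀) + -(G (b₀, w) - c₀)‖
        ≤ ‖-((G (b, w) - b) - (G (b₀, w) - b₀)) + (ξ - c₀)‖ + ‖-(G (b₀, w) - c₀)‖ := norm_add_le _ _
      _ ≤ ‖-((G (b, w) - b) - (G (b₀, w) - b₀))‖ + ‖ξ - c₀‖ + ‖-(G (b₀, w) - c₀)‖ := by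
          have := norm_add_le (-((G (b, w) - b) - (G (b₀, w) - b₀))) (ξ - c₀)
          linarith
      _ = ‖(G (b, w) - b) - (G (b₀, w) - b₀)‖ + ‖ξ - c₀‖ + ‖G (b₀, w) - c₀‖ := by
          rw [norm_neg, norm_neg]
      _ ≤ r := by
          have : δ ≤ r/4 := hδr4
          linarith
  have hexuniq : ∀ ξ ∈ ball c₀ δ, ∀ w ∈ T ∩ ball q₀ δ,
      ∃ b ∈ closedBall b₀ r, G (b, w) = ξ := by
    intro ξ hξ w hw
    haveI : Nonempty (closedBall b₀ r) := ⟨⟨b₀, mem_closedBall_self hrpos.le⟩⟩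
    haveI : CompleteSpace (closedBall b₀ r) := (isClosed_closedBall (x := b₀) (ε := r)).completeSpace_coe
    set φ : closedBall b₀ r → closedBall b₀ r :=
      fun b => ⟨b.1 - G (b.1, w) + ξ, hselfmap ξ hξ w hw b.1 b.2⟩ with hφdef
    have hcontraction : ContractingWith (1/2 : NNReal) φ := by
      constructor
      · rw [← NNReal.coe_lt_coe]; norm_num
      · refine LipschitzWith.of_dist_le_mul (fun x y => ?_)
        have h1 : dist (φ x) (φ y) = ‖(x.1 - G (x.1, w) + ξ) - (y.1 - G (y.1, w) + ξ)‖ := by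
          rw [Subtype.dist_eq, dist_eq_norm]
        have h2 : (x.1 - G (x.1, w) + ξ) - (y.1 - G (y.1, w) + ξ) =
            -((G (x.1, w) - x.1) - (G (y.1, w) - y.1)) := by abel
        have h3 := hContr w (hball_sub w hw) y.1 y.2 x.1 x.2
        rw [h1, h2, norm_neg]
        have h4 : dist (x : E) (y : E) = ‖(x : E) - (y : E)‖ := dist_eq_norm _ _
        rw [Subtype.dist_eq, h4]
        have : ((1/2 : NNReal) : ℝ) = 1/2 := by norm_num
        rw [this]
        exact h3
    let b := ContractingWith.fixedPoint φ hcontraction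
    have hbfix : φ b = b := hcontraction.fixedPoint_isFixedPt
    refine ⟨b.1, b.2, ?_⟩
    have : b.1 - G (b.1, w) + ξ = b.1 := congrArg Subtype.val hbfix
    have h5 : ξ - G (b.1, w) = 0 := by
      have := this
      calc ξ - G (b.1, w) = (b.1 - G (b.1, w) + ξ) - b.1 := by abel
        _ = 0 := by rw [this]; abel
    have := sub_eq_zero.1 h5
    exact this.symm
  have huniq2 : ∀ w ∈ T ∩ ball q₀ δ, ∀ b ∈ closedBall b₀ r, ∀ b' ∈ closedBall b₀ r,
      G (b, w) = G (b', w) → b = b' := by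
    intro w hw b hb b' hb' hGeq
    have h1 := hContr w (hball_sub w hw) b hb b' hb'
    rw [hGeq] at h1
    have h2 : (G (b', w) - b') - (G (b', w) - b) = b - b' := by abel
    rw [h2] at h1
    have h3 : ‖b - b'‖ = ‖b' - b‖ := norm_sub_rev _ _
    rw [h3] at h1
    have : ‖b' - b‖ = 0 := by linarith [norm_nonneg (b' - b)]
    have := norm_eq_zero.1 this
    exact (sub_eq_zero.1 this).symm
  -- definition of Z
  set Z : E × P → E := fun q =>
    if h : ∃ b ∈ closedBall b₀ r, G (b, q.2) = q.1 then h.choose else b₀ with hZdef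
  have hZspec : ∀ ξ ∈ ball c₀ δ, ∀ w ∈ T ∩ ball q₀ δ,
      Z (ξ, w) ∈ closedBall b₀ r ∧ G (Z (ξ, w), w) = ξ := by
    intro ξ hξ w hw
    have h : ∃ b ∈ closedBall b₀ r, G (b, (ξ, w).2) = (ξ, w).1 := hexuniq ξ hξ w hw
    have hZval : Z (ξ, w) = h.choose := by rw [hZdef]; exact dif_pos h
    rw [hZval]
    exact ⟨h.choose_spec.1, h.choose_spec.2⟩
  have hZuniq : ∀ ξ ∈ ball c₀ δ, ∀ w ∈ T ∩ ball q₀ δ, ∀ b' ∈ closedBall b₀ r,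
      G (b', w) = ξ → b' = Z (ξ, w) := by
    intro ξ hξ w hw b' hb' hGb'
    exact huniq2 w hw b' hb' _ (hZspec ξ hξ w hw).1 (by rw [hGb', (hZspec ξ hξ w hw).2])
  clear_value Z
  -- Z is Lipschitz on D
  set L : ℝ := 2 * (M + 1) with hLdef
  have hLpos : 0 < L := by rw [hLdef]; positivity
  clear_value M L
  have hZlip : ∀ q ∈ D, ∀ q' ∈ D, ‖Z q' - Z q‖ ≤ L * ‖q' - q‖ := by
    rintro ⟨ξ, w⟩ hq ⟨ξ', w'⟩ hq'
    have hξ : ξ ∈ ball c₀ δ := hq.1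
    have hw : w ∈ T ∩ ball q₀ δ := hq.2
    have hξ' : ξ' ∈ ball c₀ δ := hq'.1
    have hw' : w' ∈ T ∩ ball q₀ δ := hq'.2
    obtain ⟨hb, hGb⟩ := hZspec ξ hξ w hw
    obtain ⟨hb', hGb'⟩ := hZspec ξ' hξ' w' hw'
    set b : E := Z (ξ, w) with hbdef
    set b' : E := Z (ξ', w') with hb'def
    clear_value b b'
    have key : b' - b = -((G (b', w') - b') - (G (b, w') - b)) +
        (G (b, w) - G (b, w')) + (ξ' - ξ) := by
      rw [hGb, hGb']; abel
    have h1 : ‖(G (b', w') - b') - (G (b, w') - b)‖ ≤ 1/2 * ‖b' - b‖ :=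
      hContr w' (hball_sub w' hw') b hb b' hb'
    have h2 : ‖G (b, w) - G (b, w')‖ ≤ M * ‖w - w'‖ := by
      have := hGLip (b, w') ⟨hb, hball_sub w' hw'⟩ (b, w) ⟨hb, hball_sub w hw⟩
      have hnorm : ‖((b, w) : E × P) - (b, w')‖ = ‖w - w'‖ := by
        rw [Prod.mk_sub_mk, Prod.norm_def]
        simp [norm_nonneg]
      rwa [hnorm] at this
    have h3 : ‖w - w'‖ ≤ ‖((ξ', w') : E × P) - (ξ, w)‖ := by
      rw [norm_sub_rev w w', Prod.mk_sub_mk, Prod.norm_def]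
      exact le_max_right _ _
    have h4 : ‖ξ' - ξ‖ ≤ ‖((ξ', w') : E × P) - (ξ, w)‖ := by
      rw [Prod.mk_sub_mk, Prod.norm_def]
      exact le_max_left _ _
    have h5 : ‖b' - b‖ ≤ 1/2 * ‖b' - b‖ + M * ‖w - w'‖ + ‖ξ' - ξ‖ := by
      calc ‖b' - b‖ = ‖-((G (b', w') - b') - (G (b, w') - b)) + (G (b, w) - G (b, w')) + (ξ' - ξ)‖ := by
            rw [key]
        _ ≤ ‖-((G (b', w') - b') - (G (b, w') - b)) + (G (b, w) - G (b, w'))‖ + ‖ξ' - ξ‖ :=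
            norm_add_le _ _
        _ ≤ ‖-((G (b', w') - b') - (G (b, w') - b))‖ + ‖G (b, w) - G (b, w')‖ + ‖ξ' - ξ‖ := by
            linarith [norm_add_le (-((G (b', w') - b') - (G (b, w') - b))) (G (b, w) - G (b, w'))]
        _ = ‖(G (b', w') - b') - (G (b, w') - b)‖ + ‖G (b, w) - G (b, w')‖ + ‖ξ' - ξ‖ := by
            rw [norm_neg]
        _ ≤ 1/2 * ‖b' - b‖ + M * ‖w - w'‖ + ‖ξ' - ξ‖ := by linarith
    have hMw : M * ‖w - w'‖ ≤ M * ‖((ξ', w') : E × P) - (ξ, w)‖ := by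
      exact mul_le_mul_of_nonneg_left h3 hMpos.le
    rw [hLdef]
    linarith [h5, hMw, h4]
  have hZcont : ContinuousOn Z D := by
    intro q hq
    rw [Metric.continuousWithinAt_iff]
    intro ε hε
    refine ⟨ε / L, by positivity, fun q' hq' hd => ?_⟩
    have h9 : dist (Z q') (Z q) ≤ L * dist q' q := by
      rw [dist_eq_norm, dist_eq_norm]; exact hZlip q hq q' hq'
    calc dist (Z q') (Z q) ≤ L * dist q' q := h9
      _ < L * (ε / L) := by exact mul_lt_mul_of_pos_left hd hLpos
      _ = ε := by field_simp
  -- membership and maps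
  have hqD_mem : ∀ q ∈ D, ((Z q, q.2) : E × P) ∈ V := by
    rintro ⟨ξ, w⟩ hq
    exact ⟨(hZspec ξ hq.1 w hq.2).1, hball_sub w hq.2⟩
  have hmapsTo : MapsTo (fun q : E × P => ((Z q, q.2) : E × P)) D S' :=
    fun q hq => hVS' (hqD_mem q hq)
  have hmc : ContinuousOn (fun q : E × P => ((Z q, q.2) : E × P)) D :=
    hZcont.prodMk (continuous_snd.continuousOn)
  -- units
  have hunit : ∀ q ∈ D, ∃ u : (E →L[ℝ] E)ˣ, (u : E →L[ℝ] E) = A (Z q, q.2) := by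
    intro q hq
    have hAle : ‖A (Z q, q.2) - 1‖ ≤ 1/2 :=
      hA1 _ (hVS' (hqD_mem q hq)) (hVd _ (hqD_mem q hq))
    have hlt : ‖1 - A (Z q, q.2)‖ < 1 := by
      rw [norm_sub_rev]; linarith
    exact ⟨Units.oneSub _ hlt, by simp [Units.oneSub]⟩
  -- derivative candidate
  set Df : (E × P) → (E × P) →L[ℝ] E := fun q =>
    (Ring.inverse (A (Z q, q.2))).comp
      ((ContinuousLinearMap.fst ℝ E P) -
        (f (Z q, q.2)).comp ((inr ℝ E P).comp (ContinuousLinearMap.snd ℝ E P))) with hDfdef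
  have hinv_mul : ∀ q ∈ D, ∀ v : E, Ring.inverse (A (Z q, q.2)) (A (Z q, q.2) v) = v := by
    intro q hq v
    obtain ⟨u, hu⟩ := hunit q hq
    rw [← hu, Ring.inverse_unit]
    have : ((↑u⁻¹ : E →L[ℝ] E) * (↑u : E →L[ℝ] E)) v = (1 : E →L[ℝ] E) v := by
      rw [Units.inv_mul]
    rw [ContinuousLinearMap.mul_apply] at this
    simpa using this
  -- the derivative of Z
  have hderiv : ∀ q ∈ D, HasFDerivWithinAt Z (Df q) D q := by
    intro q hq
    have hpV : ((Z q, q.2) : E × P) ∈ V := hqD_mem q hq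
    set p : E × P := (Z q, q.2) with hpdef
    have h1 : HasFDerivWithinAt G (f p) S' p := hGdiff p (hVS' hpV)
    have h1o : (fun p' => G p' - G p - (f p) (p' - p)) =o[𝓝[S'] p] fun p' => p' - p :=
      h1.isLittleO
    have hmt : Tendsto (fun q' : E × P => ((Z q', q'.2) : E × P)) (𝓝[D] q) (𝓝[S'] p) :=
      ContinuousWithinAt.tendsto_nhdsWithin (hmc q hq) hmapsTo
    have h2 := h1o.comp_tendsto hmt
    have h3 : (fun q' : E × P => ((Z q', q'.2) : E × P) - p) =O[𝓝[D] q] fun q' => q' - q := by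
      rw [Asymptotics.isBigO_iff]
      refine ⟨L + 1, Filter.eventually_of_mem self_mem_nhdsWithin (fun q' hq' => ?_)⟩
      have hl := hZlip q hq q' hq'
      have hsub : ((Z q', q'.2) : E × P) - p = ((Z q' - Z q, q'.2 - q.2) : E × P) := by
        rw [hpdef, Prod.mk_sub_mk]
      rw [hsub, Prod.norm_def]
      have h2' : ‖q'.2 - q.2‖ ≤ ‖q' - q‖ := by
        calc ‖q'.2 - q.2‖ = ‖(q' - q).2‖ := rfl
          _ ≤ ‖q' - q‖ := _root_.norm_snd_le (q' - q)
      have hmax : max ‖Z q' - Z q‖ ‖q'.2 - q.2‖ ≤ (L + 1) * ‖q' - q‖ := by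
        have hnn : (0:ℝ) ≤ ‖q' - q‖ := norm_nonneg _
        have hLnn : (0:ℝ) ≤ L * ‖q' - q‖ := mul_nonneg hLpos.le hnn
        apply max_le
        · linarith
        · linarith
      exact hmax
    have h4 := h2.trans_isBigO h3
    have heq : ∀ q' ∈ D, Z q' - Z q - Df q (q' - q) =
        -(Ring.inverse (A (Z q, q.2))
          (G ((Z q', q'.2) : E × P) - G p - f p (((Z q', q'.2) : E × P) - p))) := by
      intro q' hq'
      have hGq' : G ((Z q', q'.2) : E × P) = q'.1 := by
        have := (hZspec q'.1 hq'.1 q'.2 hq'.2).2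
        rwa [Prod.mk.eta] at this
      have hGq : G p = q.1 := by
        have := (hZspec q.1 hq.1 q.2 hq.2).2
        rwa [Prod.mk.eta] at this
      have hx : ((Z q', q'.2) : E × P) - p =
          inl ℝ E P (Z q' - Z q) + inr ℝ E P (q'.2 - q.2) := by
        rw [hpdef, Prod.mk_sub_mk]
        simp [Prod.ext_iff]
      have hfp : f p (((Z q', q'.2) : E × P) - p) =
          A (Z q, q.2) (Z q' - Z q) + f p (inr ℝ E P (q'.2 - q.2)) := by
        rw [hx, map_add]
        rfl
      have hDfq : Df q (q' - q) =
          Ring.inverse (A (Z q, q.2)) ((q'.1 - q.1) - f p (inr ℝ E P (q'.2 - q.2))) := by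
        rw [hDfdef]
        simp only [ContinuousLinearMap.comp_apply, ContinuousLinearMap.sub_apply,
          ContinuousLinearMap.coe_fst', ContinuousLinearMap.coe_snd']
        rfl
      have hrearr : q'.1 - q.1 - (A (Z q, q.2) (Z q' - Z q) + f p (inr ℝ E P (q'.2 - q.2))) =
          ((q'.1 - q.1) - f p (inr ℝ E P (q'.2 - q.2))) - A (Z q, q.2) (Z q' - Z q) := by
        abel
      have hexp : Ring.inverse (A (Z q, q.2))
          (((q'.1 - q.1) - f p (inr ℝ E P (q'.2 - q.2))) - A (Z q, q.2) (Z q' - Z q)) =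
          Ring.inverse (A (Z q, q.2)) ((q'.1 - q.1) - f p (inr ℝ E P (q'.2 - q.2)))
            - (Z q' - Z q) := by
        rw [map_sub, hinv_mul q hq]
      rw [hGq', hGq, hfp, hDfq, hrearr, hexp]
      abel
    have h4' : (fun q' : E × P => Ring.inverse (A (Z q, q.2))
        (G ((Z q', q'.2) : E × P) - G p - f p (((Z q', q'.2) : E × P) - p)))
        =o[𝓝[D] q] fun q' => q' - q :=
      ((Ring.inverse (A (Z q, q.2))).isBigO_comp _ _).trans_isLittleO h4
    have h5 := h4'.neg_left
    refine HasFDerivWithinAt.of_isLittleO (h5.congr' ?_ (Filter.EventuallyEq.refl _ _))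
    exact Filter.eventuallyEq_of_mem self_mem_nhdsWithin (fun q' hq' => (heq q' hq').symm)
  -- unique differentiability of D
  have hDu : UniqueDiffOn ℝ D := by
    apply UniqueDiffOn.prod isOpen_ball.uniqueDiffOn
    intro x hx
    exact (hTu x hx.1).inter (isOpen_ball.mem_nhds hx.2)
  have hfz : ∀ q ∈ D, fderivWithin ℝ Z D q = Df q := fun q hq =>
    (hderiv q hq).fderivWithin (hDu q hq)
  -- continuity of Df on D
  have hfm : ContinuousOn (fun q : E × P => f (Z q, q.2)) D := hfc.comp hmc hmapsTo
  have hAm : ContinuousOn (fun q : E × P => A (Z q, q.2)) D :=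
    ContinuousOn.clm_comp hfm continuousOn_const
  have hInv : ContinuousOn (fun q : E × P => Ring.inverse (A (Z q, q.2))) D := by
    intro q hq
    obtain ⟨u, hu⟩ := hunit q hq
    have hca : ContinuousAt Ring.inverse (A (Z q, q.2)) := by
      rw [← hu]
      exact NormedRing.inverse_continuousAt u
    exact ContinuousAt.comp_continuousWithinAt (f := fun q : E × P => A (Z q, q.2)) hca (hAm q hq)
  have hK : ContinuousOn (fun q : E × P =>
      (f (Z q, q.2)).comp ((inr ℝ E P).comp (ContinuousLinearMap.snd ℝ E P))) D :=
    ContinuousOn.clm_comp hfm continuousOn_const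
  have hDfc : ContinuousOn Df D := by
    rw [hDfdef]
    exact ContinuousOn.clm_comp hInv (continuousOn_const.sub hK)
  -- Z is C¹ on D
  have hZC1 : ContDiffOn ℝ 1 Z D := by
    have h01 : ((0 : WithTop ℕ∞) + 1 : WithTop ℕ∞) = 1 := zero_add 1
    rw [← h01, contDiffOn_succ_iff_fderivWithin hDu]
    refine ⟨fun q hq => (hderiv q hq).differentiableWithinAt, by simp, ?_⟩
    rw [contDiffOn_zero]
    exact hDfc.congr hfz
  -- assemble the conclusion
  refine ⟨δ, hδpos, Z, hZC1, fun ξ hξ w hw => ⟨(hZspec ξ hξ w hw).2, fun b' hb' hGb' => ?_⟩⟩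
  exact hZuniq ξ hξ w hw b' (closedBall_subset_closedBall hδr (ball_subset_closedBall hb')) hGb'


theorem vector_time_cauchy_problem
    (n : ℕ)
    (F : ℝ → (Fin n → ℝ) → ℝ → (Fin n → ℝ))
    (hF : ContDiffOn ℝ 1 (fun p : ℝ × (Fin n → ℝ) × ℝ => F p.1 p.2.1 p.2.2)
      (univ ×ˢ univ ×ˢ Icc (0 : ℝ) 1))
    (xt : ℝ → ℝ → (Fin n → ℝ) → ℝ → (Fin n → ℝ))
    (hinit : ∀ t₀ ζ ε, xt t₀ t₀ ζ ε = ζ)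
    (hode : ∀ (t₀ : ℝ) (ζ : Fin n → ℝ) (ε : ℝ), ε ∈ Icc (0 : ℝ) 1 →
      ∀ t, HasDerivAt (fun τ => xt τ t₀ ζ ε) (F t (xt t t₀ ζ ε) ε) t)
    (huniq : ∀ (t₀ : ℝ) (ζ : Fin n → ℝ) (ε : ℝ), ε ∈ Icc (0 : ℝ) 1 →
      ∀ y : ℝ → (Fin n → ℝ), y t₀ = ζ →
        (∀ t, HasDerivAt y (F t (y t) ε) t) → y = fun t => xt t t₀ ζ ε)
    (hsmooth : ∀ t₀ : ℝ, ContDiffOn ℝ 1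
      (fun p : ℝ × (Fin n → ℝ) × ℝ => xt p.1 t₀ p.2.1 p.2.2)
      (univ ×ˢ univ ×ˢ Icc (0 : ℝ) 1))
    (tstar : ℝ) (ξstar : Fin n → ℝ) :
    ∃ γ > (0 : ℝ), ∃ ζf : (Fin n → ℝ) → (Fin n → ℝ) → ℝ → (Fin n → ℝ),
      ζf 0 ξstar 0 = ξstar ∧
      ContDiffOn ℝ 1 (fun p : (Fin n → ℝ) × (Fin n → ℝ) × ℝ => ζf p.1 p.2.1 p.2.2)
        (ball 0 γ ×ˢ ball ξstar γ ×ˢ Ico (0 : ℝ) γ) ∧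
      ContDiffOn ℝ 1
        (fun p : ℝ × (Fin n → ℝ) × (Fin n → ℝ) × ℝ =>
          xt p.1 tstar (ζf p.2.1 p.2.2.1 p.2.2.2) p.2.2.2)
        (univ ×ˢ ball 0 γ ×ˢ ball ξstar γ ×ˢ Ico (0 : ℝ) γ) ∧
      ∀ Δ ∈ ball (0 : Fin n → ℝ) γ, ∀ ξ ∈ ball ξstar γ, ∀ ε ∈ Ico (0 : ℝ) γ,
        (∀ j : Fin n, xt (tstar + Δ j) tstar (ζf Δ ξ ε) ε j = ξ j) ∧
        (∀ ζ' ∈ ball ξstar γ,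
          (∀ j : Fin n, xt (tstar + Δ j) tstar ζ' ε j = ξ j) → ζ' = ζf Δ ξ ε) := by
  classical
  set T : Set ((Fin n → ℝ) × ℝ) := (univ : Set (Fin n → ℝ)) ×ˢ Icc (0:ℝ) 1 with hTdef
  set G : (Fin n → ℝ) × ((Fin n → ℝ) × ℝ) → (Fin n → ℝ) := fun p => fun j => xt (tstar + p.2.1 j) tstar p.1 p.2.2 j with hGdef
  have hTc : Convex ℝ T := convex_univ.prod (convex_Icc _ _)
  have hTu : UniqueDiffOn ℝ T := uniqueDiffOn_univ.prod (uniqueDiffOn_Icc zero_lt_one)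
  set q₀ : (Fin n → ℝ) × ℝ := ((0 : Fin n → ℝ), (0:ℝ)) with hq₀def
  have hq₀T : q₀ ∈ T := ⟨mem_univ _, ⟨le_refl 0, zero_le_one⟩⟩
  -- smoothness of G
  have hGC1 : ContDiffOn ℝ 1 G ((univ : Set (Fin n → ℝ)) ×ˢ T) := by
    rw [hGdef]
    apply contDiffOn_pi.2
    intro j
    have hψ : ContDiff ℝ 1 (fun p : (Fin n → ℝ) × ((Fin n → ℝ) × ℝ) => ((tstar + p.2.1 j, (p.1, p.2.2)) : ℝ × (Fin n → ℝ) × ℝ)) := by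
      apply ContDiff.prodMk
      · exact contDiff_const.add
          (((ContinuousLinearMap.proj j : (Fin n → ℝ) →L[ℝ] ℝ).comp
            ((ContinuousLinearMap.fst ℝ (Fin n → ℝ) ℝ).comp (ContinuousLinearMap.snd ℝ (Fin n → ℝ) ((Fin n → ℝ) × ℝ)))).contDiff)
      · exact contDiff_fst.prodMk contDiff_snd.snd
    have hmaps : MapsTo (fun p : (Fin n → ℝ) × ((Fin n → ℝ) × ℝ) => ((tstar + p.2.1 j, (p.1, p.2.2)) : ℝ × (Fin n → ℝ) × ℝ))
        ((univ : Set (Fin n → ℝ)) ×ˢ T) ((univ : Set ℝ) ×ˢ (univ : Set (Fin n → ℝ)) ×ˢ Icc (0:ℝ) 1) :=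
      fun p hp => ⟨mem_univ _, mem_univ _, hp.2.2⟩
    have hcomp := (hsmooth tstar).comp (hψ.contDiffOn) hmaps
    exact ((contDiffOn_pi.1 hcomp) j).congr (fun x hx => rfl)
  -- derivative of G in the first variable at the base point is the identity
  have hGslice : ∀ ζ : (Fin n → ℝ), G (ζ, q₀) = ζ := by
    intro ζ
    funext j
    show xt (tstar + (0 : Fin n → ℝ) j) tstar ζ 0 j = ζ j
    simp only [Pi.zero_apply, add_zero]
    exact congrFun (hinit tstar ζ 0) j
  have hA : (fderivWithin ℝ G ((univ : Set (Fin n → ℝ)) ×ˢ T) (ξstar, q₀)).comp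
      (ContinuousLinearMap.inl ℝ (Fin n → ℝ) ((Fin n → ℝ) × ℝ)) = ContinuousLinearMap.id ℝ (Fin n → ℝ) := by
    have hmem : (ξstar, q₀) ∈ (univ : Set (Fin n → ℝ)) ×ˢ T := ⟨mem_univ _, hq₀T⟩
    have hFD : HasFDerivWithinAt G (fderivWithin ℝ G ((univ : Set (Fin n → ℝ)) ×ˢ T) (ξstar, q₀))
        ((univ : Set (Fin n → ℝ)) ×ˢ T) (ξstar, q₀) :=
      ((hGC1.differentiableOn one_ne_zero) _ hmem).hasFDerivWithinAt
    have hι : HasFDerivWithinAt (fun ζ : (Fin n → ℝ) => ((ζ, q₀) : (Fin n → ℝ) × ((Fin n → ℝ) × ℝ)))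
        (ContinuousLinearMap.inl ℝ (Fin n → ℝ) ((Fin n → ℝ) × ℝ)) (univ : Set (Fin n → ℝ)) ξstar := by
      have h1 : HasFDerivAt (fun ζ : (Fin n → ℝ) => ContinuousLinearMap.inl ℝ (Fin n → ℝ) ((Fin n → ℝ) × ℝ) ζ + ((0 : Fin n → ℝ), q₀))
          (ContinuousLinearMap.inl ℝ (Fin n → ℝ) ((Fin n → ℝ) × ℝ)) ξstar :=
        (ContinuousLinearMap.hasFDerivAt _).add_const _
      have h2 : (fun ζ : (Fin n → ℝ) => ContinuousLinearMap.inl ℝ (Fin n → ℝ) ((Fin n → ℝ) × ℝ) ζ + ((0 : Fin n → ℝ), q₀)) =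
          fun ζ : (Fin n → ℝ) => ((ζ, q₀) : (Fin n → ℝ) × ((Fin n → ℝ) × ℝ)) := by
        funext ζ; simp [Prod.ext_iff]
      rw [h2] at h1
      exact h1.hasFDerivWithinAt
    have hcomp := hFD.comp ξstar hι (fun ζ _ => by exact ⟨mem_univ _, hq₀T⟩)
    have hid : (G ∘ fun ζ : (Fin n → ℝ) => ((ζ, q₀) : (Fin n → ℝ) × ((Fin n → ℝ) × ℝ))) =
        fun ζ : (Fin n → ℝ) => ζ := funext fun ζ => hGslice ζ
    rw [hid] at hcomp
    exact (hasFDerivWithinAt_univ.1 hcomp).unique (hasFDerivAt_id ξstar)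
  obtain ⟨δ, hδpos, Z, hZC1, hZprop⟩ :=
    halfspace_ift G T hTc hTu ξstar q₀ hq₀T hGC1 hA
  have hc₀ : G (ξstar, q₀) = ξstar := hGslice ξstar
  rw [hc₀] at hZC1 hZprop
  set γ : ℝ := min δ 1 with hγdef
  have hγpos : 0 < γ := lt_min hδpos zero_lt_one
  have hγδ : γ ≤ δ := min_le_left _ _
  have hγ1 : γ ≤ 1 := min_le_right _ _
  -- memberships
  have hmemw : ∀ Δ ∈ ball (0 : Fin n → ℝ) γ, ∀ ε ∈ Ico (0:ℝ) γ,
      ((Δ, ε) : (Fin n → ℝ) × ℝ) ∈ T ∩ ball q₀ δ := by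
    intro Δ hΔ ε hε
    refine ⟨⟨mem_univ _, ⟨hε.1, le_trans hε.2.le hγ1⟩⟩, ?_⟩
    rw [mem_ball, hq₀def, Prod.dist_eq]
    apply max_lt
    · exact lt_of_lt_of_le hΔ hγδ
    · rw [Real.dist_eq, sub_zero, abs_of_nonneg hε.1]
      exact lt_of_lt_of_le hε.2 hγδ
  have hmemξ : ∀ ξ ∈ ball ξstar γ, ξ ∈ ball ξstar δ :=
    fun ξ hξ => lt_of_lt_of_le hξ hγδ
  set ζf : (Fin n → ℝ) → (Fin n → ℝ) → ℝ → (Fin n → ℝ) :=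
    fun Δ ξ ε => Z (ξ, (Δ, ε)) with hζfdef
  refine ⟨γ, hγpos, ζf, ?_, ?_, ?_, ?_⟩
  · -- ζf 0 ξstar 0 = ξstar
    have h1 := hZprop ξstar (mem_ball_self hδpos) q₀
      ⟨hq₀T, mem_ball_self hδpos⟩
    have h2 := h1.2 ξstar (mem_ball_self hδpos) (hGslice ξstar)
    exact h2.symm
  · -- C¹ of ζf
    have hσ : ContDiff ℝ 1 (fun p : (Fin n → ℝ) × (Fin n → ℝ) × ℝ => ((p.2.1, (p.1, p.2.2)) : (Fin n → ℝ) × ((Fin n → ℝ) × ℝ))) :=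
      contDiff_snd.fst.prodMk (contDiff_fst.prodMk contDiff_snd.snd)
    have hmaps : MapsTo (fun p : (Fin n → ℝ) × (Fin n → ℝ) × ℝ => ((p.2.1, (p.1, p.2.2)) : (Fin n → ℝ) × ((Fin n → ℝ) × ℝ)))
        (ball (0 : Fin n → ℝ) γ ×ˢ ball ξstar γ ×ˢ Ico (0:ℝ) γ) (ball ξstar δ ×ˢ (T ∩ ball q₀ δ)) := by
      rintro ⟨Δ, ξ, ε⟩ ⟨hΔ, hξ, hε⟩
      exact ⟨hmemξ ξ hξ, hmemw Δ hΔ ε hε⟩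
    exact hZC1.comp (hσ.contDiffOn) hmaps
  · -- C¹ of the composed solution
    have hm : ContDiffOn ℝ 1
        (fun p : ℝ × (Fin n → ℝ) × (Fin n → ℝ) × ℝ => ((p.1, (Z (p.2.2.1, (p.2.1, p.2.2.2)), p.2.2.2)) : ℝ × (Fin n → ℝ) × ℝ))
        ((univ : Set ℝ) ×ˢ ball (0 : Fin n → ℝ) γ ×ˢ ball ξstar γ ×ˢ Ico (0:ℝ) γ) := by
      apply ContDiffOn.prodMk contDiff_fst.contDiffOn
      apply ContDiffOn.prodMk
      · have hσ2 : ContDiff ℝ 1 (fun p : ℝ × (Fin n → ℝ) × (Fin n → ℝ) × ℝ => ((p.2.2.1, (p.2.1, p.2.2.2)) : (Fin n → ℝ) × ((Fin n → ℝ) × ℝ))) :=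
          (contDiff_snd.snd.fst).prodMk ((contDiff_snd.fst).prodMk (contDiff_snd.snd.snd))
        have hmaps2 : MapsTo (fun p : ℝ × (Fin n → ℝ) × (Fin n → ℝ) × ℝ => ((p.2.2.1, (p.2.1, p.2.2.2)) : (Fin n → ℝ) × ((Fin n → ℝ) × ℝ)))
            ((univ : Set ℝ) ×ˢ ball (0 : Fin n → ℝ) γ ×ˢ ball ξstar γ ×ˢ Ico (0:ℝ) γ)
            (ball ξstar δ ×ˢ (T ∩ ball q₀ δ)) := by
          rintro ⟨t, Δ, ξ, ε⟩ ⟨-, hΔ, hξ, hε⟩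
          exact ⟨hmemξ ξ hξ, hmemw Δ hΔ ε hε⟩
        exact hZC1.comp (hσ2.contDiffOn) hmaps2
      · exact (contDiff_snd.snd.snd).contDiffOn
    have hmaps3 : MapsTo
        (fun p : ℝ × (Fin n → ℝ) × (Fin n → ℝ) × ℝ => ((p.1, (Z (p.2.2.1, (p.2.1, p.2.2.2)), p.2.2.2)) : ℝ × (Fin n → ℝ) × ℝ))
        ((univ : Set ℝ) ×ˢ ball (0 : Fin n → ℝ) γ ×ˢ ball ξstar γ ×ˢ Ico (0:ℝ) γ)
        ((univ : Set ℝ) ×ˢ (univ : Set (Fin n → ℝ)) ×ˢ Icc (0:ℝ) 1) := by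
      rintro ⟨t, Δ, ξ, ε⟩ ⟨-, hΔ, hξ, hε⟩
      exact ⟨mem_univ _, mem_univ _, ⟨hε.1, le_trans hε.2.le hγ1⟩⟩
    exact (hsmooth tstar).comp hm hmaps3
  · -- the vector-time initial condition and uniqueness
    intro Δ hΔ ξ hξ ε hε
    have hw := hmemw Δ hΔ ε hε
    have hξδ := hmemξ ξ hξ
    obtain ⟨hGZ, huni⟩ := hZprop ξ hξδ ((Δ, ε) : (Fin n → ℝ) × ℝ) hw
    constructor
    · intro j
      exact congrFun hGZ j
    · intro ζ' hζ' hcond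
      refine huni ζ' (hmemξ ζ' hζ') ?_
      funext j
      exact hcond j
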